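/- Let I ⊆ ℝ be an interval containing ω*, ω_{r−1}, ω_r, and ω_{r+1}. Let f : ℝ → ℝ be twice differentiable on I with f′(ω*) = 0, f″ Lipschitz on I with constant γ, |f″(ω_r)| ≥ ℓ₁ > 0, and |f″(ω)| ≤ M for all ω ∈ I. Let g : ℝ → ℝ be three times differentiable on I with |g‴| ≤ γ₁ on I and |g″(ω_r)| ≥ ℓ₂ > 0, and suppose f′(ω_r) = g′(ω_r), g′(ω_{r+1}) = 0, and |g″(ω_r) − f″(ω_r)| ≤ μ·max{|ω_r − ω*|, |ω_{r−1} − ω*|}. Set δ := max{|ω_{r+1} − ω*|, |ω_r − ω*|, |ω_{r−1} − ω*|} and assume 1 − (γ₁/ℓ₂)·δ ≥ c₄ for some c₄ > 0. Then |ω_{r+1} − ω*| ≤ ν·|ω_r − ω*|·max{|ω_{r−1} − ω*|, |ω_r − ω*|}, where ν := (μ·M/(ℓ₁·ℓ₂) + γ/(2·ℓ₁) + γ₁/ℓ₂)/c₄. -/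

import Mathlib

open Set

/-- Quadratic Taylor remainder bound: if `φ'` satisfies a Lipschitz-type bound
relative to the base point `a` on a convex set `I`, then the first-order Taylor
remainder of `φ` at `a` is bounded quadratically. -/
lemma quad_taylor_aux {I : Set ℝ} (hI : Convex ℝ I) {φ φ' : ℝ → ℝ} {K : ℝ}
    (hφ : ∀ x ∈ I, HasDerivAt φ (φ' x) x)
    {a b : ℝ} (ha : a ∈ I) (hb : b ∈ I)
    (hK : ∀ x ∈ I, |φ' x - φ' a| ≤ K * |x - a|) :
    |φ b - φ a - φ' a * (b - a)| ≤ K / 2 * (b - a) ^ 2 := by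
  set F : ℝ → ℝ := fun t => φ (a + t * (b - a)) - (φ a + φ' a * (t * (b - a))) with hF
  have hmem : ∀ t ∈ Set.Icc (0:ℝ) 1, a + t * (b - a) ∈ I := by
    intro t ht
    simpa [smul_eq_mul] using hI.add_smul_sub_mem ha hb ht
  have hFd : ∀ t ∈ Set.Icc (0:ℝ) 1,
      HasDerivAt F ((φ' (a + t * (b - a)) - φ' a) * (b - a)) t := by
    intro t ht
    have h1 : HasDerivAt (fun t : ℝ => a + t * (b - a)) (b - a) t := by
      simpa using ((hasDerivAt_id t).mul_const (b - a)).const_add a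
    have h2 := (hφ _ (hmem t ht)).comp t h1
    have h3 : HasDerivAt (fun t : ℝ => φ a + φ' a * (t * (b - a))) (φ' a * (b - a)) t := by
      simpa using (((hasDerivAt_id t).mul_const (b - a)).const_mul (φ' a)).const_add (φ a)
    have h4 := h2.sub h3
    simpa [hF, sub_mul, Function.comp_def, Pi.sub_def] using h4
  have key := image_norm_le_of_norm_deriv_right_le_deriv_boundary
    (f := F) (f' := fun t => (φ' (a + t * (b - a)) - φ' a) * (b - a)) (a := 0) (b := 1)
    (B := fun t => K / 2 * (b - a) ^ 2 * t ^ 2) (B' := fun t => K / 2 * (b - a) ^ 2 * (2 * t))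
    (fun t ht => (hFd t ht).continuousAt.continuousWithinAt)
    (fun t ht => (hFd t (Ico_subset_Icc_self ht)).hasDerivWithinAt)
    (by simp [hF])
    (by
      intro t
      simpa using (hasDerivAt_pow 2 t).const_mul (K / 2 * (b - a) ^ 2))
    (by
      intro t ht
      have htI : a + t * (b - a) ∈ I := hmem t (Ico_subset_Icc_self ht)
      have h1 : |φ' (a + t * (b - a)) - φ' a| ≤ K * (t * |b - a|) := by
        have := hK _ htI
        simpa [abs_mul, abs_of_nonneg ht.1, mul_assoc] using this
      have h2 : ‖(φ' (a + t * (b - a)) - φ' a) * (b - a)‖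
          = |φ' (a + t * (b - a)) - φ' a| * |b - a| := by
        simp [Real.norm_eq_abs, abs_mul]
      rw [h2]
      have h3 : |φ' (a + t * (b - a)) - φ' a| * |b - a| ≤ K * (t * |b - a|) * |b - a| :=
        mul_le_mul_of_nonneg_right h1 (abs_nonneg _)
      have h4 : K * (t * |b - a|) * |b - a| = K / 2 * (b - a) ^ 2 * (2 * t) := by
        have habs2 : |b - a| * |b - a| = (b - a) ^ 2 := by
          rw [abs_mul_abs_self]; ring
        rw [← habs2]; ring
      rw [h4] at h3; exact h3)
  have hfin := key (Set.right_mem_Icc.mpr zero_le_one)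
  have hF1 : F 1 = φ b - φ a - φ' a * (b - a) := by
    have hb' : a + 1 * (b - a) = b := by ring
    simp only [hF]; rw [hb']; ring
  rw [Real.norm_eq_abs, hF1] at hfin
  simpa using hfin

/-- Elementary inequality: `(e+d)² ≤ 2δe + 2md` when `d ≤ m ≤ δ`, `e ≤ δ`,
and `δ` is either `e` or `m`. -/
lemma sq_combine_aux {e d m δ : ℝ} (he0 : 0 ≤ e) (hd0 : 0 ≤ d)
    (hdm : d ≤ m) (heδ : e ≤ δ) (hmδ : m ≤ δ) (hem : δ = e ∨ δ = m) :
    (e + d) ^ 2 ≤ 2 * δ * e + 2 * m * d := by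
  rcases hem with h | h
  · subst h
    have h1 : 0 ≤ (δ - d) ^ 2 := sq_nonneg _
    have h2 : 0 ≤ (m - d) * d := mul_nonneg (by linarith) hd0
    have e1 : (δ - d) ^ 2 = δ ^ 2 - 2 * δ * d + d ^ 2 := by ring
    have e2 : (δ + d) ^ 2 = δ ^ 2 + 2 * δ * d + d ^ 2 := by ring
    have e3 : (m - d) * d = m * d - d ^ 2 := by ring
    linarith [h1, h2, e1.le, e1.ge, e2.le, e2.ge, e3.le, e3.ge]
  · subst h
    have hdδ : d ≤ δ := le_trans hdm hmδ
    have h1 : 0 ≤ (δ - e) * e := mul_nonneg (by linarith) he0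
    have h2 : 0 ≤ (δ - d) * d := mul_nonneg (by linarith) hd0
    have h3 : 0 ≤ (δ - e) * d := mul_nonneg (by linarith) hd0
    have h4 : 0 ≤ (δ - d) * e := mul_nonneg (by linarith) he0
    have e1 : (δ - e) * e = δ * e - e ^ 2 := by ring
    have e2 : (δ - d) * d = δ * d - d ^ 2 := by ring
    have e3 : (δ - e) * d = δ * d - e * d := by ring
    have e4 : (δ - d) * e = δ * e - d * e := by ring
    have e5 : (e + d) ^ 2 = e ^ 2 + 2 * (e * d) + d ^ 2 := by ring
    have e6 : d * e = e * d := by ring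
    linarith [h1, h2, h3, h4, e1.le, e1.ge, e2.le, e2.ge, e3.le, e3.ge,
      e4.le, e4.ge, e5.le, e5.ge, e6.le, e6.ge]

set_option maxHeartbeats 1000000 in
theorem local_superlinear_convergence
    (I : Set ℝ) (hI : Convex ℝ I)
    (ωs ωrm1 ωr ωr1 : ℝ) (hωs : ωs ∈ I) (hωrm1 : ωrm1 ∈ I) (hωr : ωr ∈ I)
    (hωr1 : ωr1 ∈ I)
    (f f' f'' g g' g'' g''' : ℝ → ℝ) (γ γ₁ ℓ₁ ℓ₂ M μ c₄ : ℝ)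
    (hf' : ∀ x ∈ I, HasDerivAt f (f' x) x)
    (hf'' : ∀ x ∈ I, HasDerivAt f' (f'' x) x)
    (hfs : f' ωs = 0)
    (hLipf : ∀ x ∈ I, ∀ y ∈ I, |f'' x - f'' y| ≤ γ * |x - y|)
    (hl1 : 0 < ℓ₁) (hf''r : ℓ₁ ≤ |f'' ωr|)
    (hfM : ∀ x ∈ I, |f'' x| ≤ M)
    (hg' : ∀ x ∈ I, HasDerivAt g (g' x) x)
    (hg'' : ∀ x ∈ I, HasDerivAt g' (g'' x) x)
    (hg''' : ∀ x ∈ I, HasDerivAt g'' (g''' x) x)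
    (hg3 : ∀ x ∈ I, |g''' x| ≤ γ₁)
    (hl2 : 0 < ℓ₂) (hg''r : ℓ₂ ≤ |g'' ωr|)
    (hinterp : f' ωr = g' ωr) (hopt : g' ωr1 = 0)
    (hacc : |g'' ωr - f'' ωr| ≤ μ * max |ωr - ωs| |ωrm1 - ωs|)
    (hc₄ : 0 < c₄)
    (hδ : 1 - (γ₁ / ℓ₂) * max |ωr1 - ωs| (max |ωr - ωs| |ωrm1 - ωs|) ≥ c₄) :
    |ωr1 - ωs| ≤
      ((μ * M / (ℓ₁ * ℓ₂) + γ / (2 * ℓ₁) + γ₁ / ℓ₂) / c₄) *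
        |ωr - ωs| * max |ωrm1 - ωs| |ωr - ωs| := by
  set d := |ωr - ωs| with hd'
  set dm := |ωrm1 - ωs| with hdm'
  set e := |ωr1 - ωs| with he'
  set m := max d dm with hm'
  set δ := max e m with hδ'
  have hd0 : 0 ≤ d := abs_nonneg _
  have hdm0 : 0 ≤ dm := abs_nonneg _
  have he0 : 0 ≤ e := abs_nonneg _
  have hm0 : 0 ≤ m := le_trans hd0 (le_max_left _ _)
  have hδ0 : 0 ≤ δ := le_trans he0 (le_max_left _ _)
  have hdm : d ≤ m := le_max_left _ _
  have heδ : e ≤ δ := le_max_left _ _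
  have hmδ : m ≤ δ := le_max_right _ _
  have hγ₁0 : 0 ≤ γ₁ := le_trans (abs_nonneg _) (hg3 ωr hωr)
  have hA0 : (0:ℝ) < |f'' ωr| := lt_of_lt_of_le hl1 hf''r
  have hB0 : (0:ℝ) < |g'' ωr| := lt_of_lt_of_le hl2 hg''r
  have hM0 : (0:ℝ) < M := lt_of_lt_of_le hA0 (hfM ωr hωr)
  have hμm : 0 ≤ μ * m := le_trans (abs_nonneg _) hacc
  -- MVT: |f' ωr| ≤ M * d
  have hp : |f' ωr| ≤ M * d := by
    have h := Convex.norm_image_sub_le_of_norm_hasDerivWithin_le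
      (f := f') (f' := f'') (s := I)
      (fun x hx => (hf'' x hx).hasDerivWithinAt)
      (fun x hx => by simpa [Real.norm_eq_abs] using hfM x hx) hI hωs hωr
    rw [hfs] at h
    simpa [Real.norm_eq_abs, hd'] using h
  -- Lipschitz bound for g''
  have hLipg : ∀ x ∈ I, |g'' x - g'' ωr| ≤ γ₁ * |x - ωr| := by
    intro x hx
    have h := Convex.norm_image_sub_le_of_norm_hasDerivWithin_le
      (f := g'') (f' := g''') (s := I)
      (fun y hy => (hg''' y hy).hasDerivWithinAt)
      (fun y hy => by simpa [Real.norm_eq_abs] using hg3 y hy) hI hωr hx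
    simpa [Real.norm_eq_abs] using h
  -- Taylor remainders
  have R2 : |f' ωs - f' ωr - f'' ωr * (ωs - ωr)| ≤ γ / 2 * (ωs - ωr) ^ 2 :=
    quad_taylor_aux hI hf'' hωr hωs (fun x hx => hLipf x hx ωr hωr)
  have R1 : |g' ωr1 - g' ωr - g'' ωr * (ωr1 - ωr)| ≤ γ₁ / 2 * (ωr1 - ωr) ^ 2 :=
    quad_taylor_aux hI hg'' hωr hωr1 (fun x hx => hLipg x hx)
  set R2v := f' ωs - f' ωr - f'' ωr * (ωs - ωr) with hR2v
  set R1v := g' ωr1 - g' ωr - g'' ωr * (ωr1 - ωr) with hR1v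
  -- key algebraic identity
  have key : f'' ωr * g'' ωr * (ωr1 - ωs)
      = f' ωr * (g'' ωr - f'' ωr) - f'' ωr * R1v + g'' ωr * R2v := by
    rw [hR2v, hR1v, hfs, hopt, hinterp]; ring
  have habs : |f'' ωr| * |g'' ωr| * e
      ≤ |f' ωr| * |g'' ωr - f'' ωr| + |f'' ωr| * |R1v| + |g'' ωr| * |R2v| := by
    have h1 : |f'' ωr * g'' ωr * (ωr1 - ωs)| = |f'' ωr| * |g'' ωr| * e := by
      rw [he']; simp [abs_mul]
    have h2 := abs_add_three (f' ωr * (g'' ωr - f'' ωr)) (-(f'' ωr * R1v)) (g'' ωr * R2v)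
    have h3 : f' ωr * (g'' ωr - f'' ωr) + -(f'' ωr * R1v) + g'' ωr * R2v
        = f'' ωr * g'' ωr * (ωr1 - ωs) := by rw [key]; ring
    rw [h3] at h2
    rw [h1] at h2
    calc |f'' ωr| * |g'' ωr| * e
        ≤ |f' ωr * (g'' ωr - f'' ωr)| + |-(f'' ωr * R1v)| + |g'' ωr * R2v| := h2
      _ = |f' ωr| * |g'' ωr - f'' ωr| + |f'' ωr| * |R1v| + |g'' ωr| * |R2v| := by
          rw [abs_neg]; simp [abs_mul]
  have hABpos : (0:ℝ) < |f'' ωr| * |g'' ωr| := mul_pos hA0 hB0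
  have hsum : e ≤ |f' ωr| * |g'' ωr - f'' ωr| / (|f'' ωr| * |g'' ωr|)
      + |R1v| / |g'' ωr| + |R2v| / |f'' ωr| := by
    have heq : |f' ωr| * |g'' ωr - f'' ωr| + |f'' ωr| * |R1v| + |g'' ωr| * |R2v|
        = (|f'' ωr| * |g'' ωr|) *
          (|f' ωr| * |g'' ωr - f'' ωr| / (|f'' ωr| * |g'' ωr|)
            + |R1v| / |g'' ωr| + |R2v| / |f'' ωr|) := by
      field_simp
    have h := habs
    rw [heq, mul_assoc] at h
    exact le_of_mul_le_mul_left (by linarith [h]) hABpos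
  have hAB : ℓ₁ * ℓ₂ ≤ |f'' ωr| * |g'' ωr| :=
    mul_le_mul hf''r hg''r hl2.le (abs_nonneg _)
  have hT1 : |f' ωr| * |g'' ωr - f'' ωr| / (|f'' ωr| * |g'' ωr|)
      ≤ M * d * (μ * m) / (ℓ₁ * ℓ₂) :=
    div_le_div₀ (by positivity)
      (mul_le_mul hp hacc (abs_nonneg _) (by positivity)) (mul_pos hl1 hl2) hAB
  have hT2 : |R1v| / |g'' ωr| ≤ (γ₁ / 2 * (ωr1 - ωr) ^ 2) / ℓ₂ :=
    div_le_div₀ (by positivity) R1 hl2 hg''r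
  have hT3 : |R2v| / |f'' ωr| ≤ (γ / 2 * (ωs - ωr) ^ 2) / ℓ₁ :=
    div_le_div₀ (le_trans (abs_nonneg _) R2) R2 hl1 hf''r
  -- geometric bounds
  have hed : |ωr1 - ωr| ≤ e + d := by
    calc |ωr1 - ωr| = |(ωr1 - ωs) + (ωs - ωr)| := by ring_nf
      _ ≤ |ωr1 - ωs| + |ωs - ωr| := abs_add_le _ _
      _ = e + d := by rw [he', hd', abs_sub_comm ωs ωr]
  have hsq : (ωr1 - ωr) ^ 2 ≤ 2 * δ * e + 2 * m * d := by
    have h1 : (ωr1 - ωr) ^ 2 ≤ (e + d) ^ 2 := by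
      rw [← sq_abs (ωr1 - ωr)]
      exact pow_le_pow_left₀ (abs_nonneg _) hed 2
    have hem : δ = e ∨ δ = m := by
      rcases le_total e m with h | h
      · exact Or.inr (max_eq_right h)
      · exact Or.inl (max_eq_left h)
    exact h1.trans (sq_combine_aux he0 hd0 hdm heδ hmδ hem)
  have hT2' : (γ₁ / 2 * (ωr1 - ωr) ^ 2) / ℓ₂ ≤ (γ₁ / ℓ₂) * δ * e + (γ₁ / ℓ₂) * (m * d) := by
    have h : γ₁ / 2 * (ωr1 - ωr) ^ 2 ≤ γ₁ / 2 * (2 * δ * e + 2 * m * d) :=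
      mul_le_mul_of_nonneg_left hsq (by linarith)
    calc (γ₁ / 2 * (ωr1 - ωr) ^ 2) / ℓ₂ ≤ (γ₁ / 2 * (2 * δ * e + 2 * m * d)) / ℓ₂ :=
          div_le_div₀ (by positivity) h hl2 le_rfl
      _ = (γ₁ / ℓ₂) * δ * e + (γ₁ / ℓ₂) * (m * d) := by ring
  have hT3' : (γ / 2 * (ωs - ωr) ^ 2) / ℓ₁ ≤ (γ / (2 * ℓ₁)) * (d * m) := by
    have hsq' : (ωs - ωr) ^ 2 = d ^ 2 := by
      rw [hd', sq_abs]; ring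
    have h0 : 0 ≤ γ / 2 * d ^ 2 := by
      rw [← hsq']; exact le_trans (abs_nonneg _) R2
    rcases eq_or_lt_of_le hd0 with h | h
    · have hz : (ωs - ωr) ^ 2 = 0 := by rw [hsq', ← h]; ring
      rw [hz, ← h]; simp
    · have hγ0 : 0 ≤ γ := by
        have hd2 : (0:ℝ) < d ^ 2 := by positivity
        by_contra hneg
        push_neg at hneg
        have hlt : γ / 2 * d ^ 2 < 0 := mul_neg_of_neg_of_pos (by linarith) hd2
        linarith
      rw [hsq']
      have e1 : (γ / 2 * d ^ 2) / ℓ₁ = (γ / (2 * ℓ₁)) * (d * d) := by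
        rw [div_mul_eq_mul_div, div_div, div_mul_eq_mul_div]
        congr 1
        ring
      rw [e1]
      have hcoef : 0 ≤ γ / (2 * ℓ₁) := by positivity
      exact mul_le_mul_of_nonneg_left (mul_le_mul_of_nonneg_left hdm hd0) hcoef
  -- combine everything
  have hmain : e ≤ (μ * M / (ℓ₁ * ℓ₂)) * (d * m) + (γ₁ / ℓ₂) * δ * e
      + (γ₁ / ℓ₂) * (m * d) + (γ / (2 * ℓ₁)) * (d * m) := by
    have e1 : M * d * (μ * m) / (ℓ₁ * ℓ₂) = (μ * M / (ℓ₁ * ℓ₂)) * (d * m) := by ring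
    linarith [hsum, hT1, hT2, hT3, hT2', hT3', e1.le, e1.ge]
  have hfinal : c₄ * e ≤ (μ * M / (ℓ₁ * ℓ₂) + γ / (2 * ℓ₁) + γ₁ / ℓ₂) * (d * m) := by
    have h1 : c₄ ≤ 1 - (γ₁ / ℓ₂) * δ := hδ
    have h2 : c₄ * e ≤ e - (γ₁ / ℓ₂) * δ * e :=
      le_trans (mul_le_mul_of_nonneg_right h1 he0) (le_of_eq (by ring))
    have h3 : (μ * M / (ℓ₁ * ℓ₂) + γ / (2 * ℓ₁) + γ₁ / ℓ₂) * (d * m)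
        = (μ * M / (ℓ₁ * ℓ₂)) * (d * m) + (γ₁ / ℓ₂) * (m * d)
          + (γ / (2 * ℓ₁)) * (d * m) := by ring
    linarith [hmain, h2, h3.le, h3.ge]
  have hmax : max dm d = m := by rw [hm', max_comm]
  rw [hmax]
  have hfin2 : e ≤ ((μ * M / (ℓ₁ * ℓ₂) + γ / (2 * ℓ₁) + γ₁ / ℓ₂) * (d * m)) / c₄ :=
    (le_div_iff₀ hc₄).mpr (by linarith [hfinal])
  calc e ≤ ((μ * M / (ℓ₁ * ℓ₂) + γ / (2 * ℓ₁) + γ₁ / ℓ₂) * (d * m)) / c₄ := hfin2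
    _ = (μ * M / (ℓ₁ * ℓ₂) + γ / (2 * ℓ₁) + γ₁ / ℓ₂) / c₄ * d * m := by ring
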